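/- Necessary condition for minimality (diagonality): let P ∈ ℝ^{k×k} be a signed permutation matrix (exactly one nonzero entry, equal to ±1, in each row and each column), and set W1 = P (I − ΛS⁻²)^{1/2} Uᵀ, W2 = U (I − ΛS⁻²)^{1/2} Pᵀ. If (W1, W2) is a local minimum of L, then P is diagonal. -/
import Mathlib


open Matrix BigOperators

attribute [local instance] Matrix.frobeniusNormedAddCommGroup Matrix.frobeniusNormedSpace

/-- Squared Frobenius norm. -/
noncomputable def frobSq {a b : ℕ} (M : Matrix (Fin a) (Fin b) ℝ) : ℝ :=
  ∑ i, ∑ j, (M i j) ^ 2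

/-- The non-uniform ℓ2 regularized linear autoencoder loss. -/
noncomputable def LAEloss (m k n : ℕ) (X : Matrix (Fin m) (Fin n) ℝ) (lam : Fin k → ℝ)
    (p : Matrix (Fin k) (Fin m) ℝ × Matrix (Fin m) (Fin k) ℝ) : ℝ :=
  (1 / (n : ℝ)) * frobSq (X - p.2 * p.1 * X)
    + frobSq (Matrix.diagonal (fun i => Real.sqrt (lam i)) * p.1)
    + frobSq (p.2 * Matrix.diagonal (fun i => Real.sqrt (lam i)))


lemma frobSq_eq_trace {a b : ℕ} (M : Matrix (Fin a) (Fin b) ℝ) :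
    frobSq M = Matrix.trace (M * Mᵀ) := by
  simp [frobSq, Matrix.trace, Matrix.diag, Matrix.mul_apply, sq]

lemma frobSq_transpose {a b : ℕ} (M : Matrix (Fin a) (Fin b) ℝ) :
    frobSq Mᵀ = frobSq M := by
  simp only [frobSq, Matrix.transpose_apply]
  exact Finset.sum_comm

lemma frobSq_mul_orth_right {a b c : ℕ} (M : Matrix (Fin a) (Fin c) ℝ)
    (U : Matrix (Fin b) (Fin c) ℝ) (h : Uᵀ * U = 1) :
    frobSq (M * Uᵀ) = frobSq M := by
  rw [frobSq_eq_trace, frobSq_eq_trace, Matrix.transpose_mul, Matrix.transpose_transpose,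
    Matrix.mul_assoc, ← Matrix.mul_assoc Uᵀ U Mᵀ, h, Matrix.one_mul]

lemma frobSq_orth_mul_left {a b c : ℕ} (U : Matrix (Fin b) (Fin a) ℝ)
    (M : Matrix (Fin a) (Fin c) ℝ) (h : Uᵀ * U = 1) : frobSq (U * M) = frobSq M := by
  rw [← frobSq_transpose (U * M), Matrix.transpose_mul, frobSq_mul_orth_right _ _ h,
    frobSq_transpose]

lemma sum_split {k : ℕ} {p q : Fin k} (hpq : p ≠ q) (f : Fin k → ℝ) :
    ∑ l, f l = (∑ l ∈ Finset.univ \ {p, q}, f l) + (f p + f q) := by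
  rw [← Finset.sum_sdiff (Finset.subset_univ {p, q}), Finset.sum_pair hpq]

noncomputable def rotM {k : ℕ} (p q : Fin k) (t : ℝ) : Matrix (Fin k) (Fin k) ℝ :=
  Matrix.of fun i j =>
    if i = p then (if j = p then Real.cos t else if j = q then -Real.sin t else 0)
    else if i = q then (if j = p then Real.sin t else if j = q then Real.cos t else 0)
    else if i = j then 1 else 0

lemma rotM_zero {k : ℕ} (p q : Fin k) : rotM p q 0 = 1 := by
  ext i j
  simp only [rotM, Matrix.of_apply, Real.cos_zero, Real.sin_zero, neg_zero, Matrix.one_apply]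
  by_cases h1 : i = p <;> by_cases h2 : i = q <;> by_cases h3 : j = p <;> by_cases h4 : j = q <;>
    simp_all [eq_comm]

lemma rotM_orth {k : ℕ} {p q : Fin k} (hpq : p ≠ q) (t : ℝ) :
    (rotM p q t)ᵀ * rotM p q t = 1 := by
  ext i j
  rw [Matrix.mul_apply]
  simp only [Matrix.transpose_apply]
  rw [sum_split hpq]
  have hdiff : (∑ l ∈ Finset.univ \ {p, q}, rotM p q t l i * rotM p q t l j)
      = if i = j ∧ i ≠ p ∧ i ≠ q then 1 else 0 := by
    split_ifs with h
    · obtain ⟨hij, hp, hq⟩ := h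
      rw [Finset.sum_eq_single i]
      · simp [rotM, hp, hq, hij.symm]
      · intro l hl hli
        have hl' := Finset.mem_sdiff.mp hl
        have hlp : l ≠ p := by simp at hl'; exact hl'.1
        have hlq : l ≠ q := by simp at hl'; exact hl'.2
        simp [rotM, hlp, hlq, hli, ← hij]
      · intro hi
        exact absurd (Finset.mem_sdiff.mpr ⟨Finset.mem_univ _, by simp [hp, hq]⟩) hi
    · apply Finset.sum_eq_zero
      intro l hl
      have hl' := Finset.mem_sdiff.mp hl
      have hlp : l ≠ p := by simp at hl'; exact hl'.1
      have hlq : l ≠ q := by simp at hl'; exact hl'.2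
      by_cases hli : l = i <;> by_cases hlj : l = j <;>
        simp_all [rotM]
  rw [hdiff]
  clear hdiff
  by_cases hip : i = p <;> by_cases hiq : i = q <;> by_cases hjp : j = p <;> by_cases hjq : j = q <;>
    simp_all [rotM, Matrix.one_apply, eq_comm] <;>
    nlinarith [Real.sin_sq_add_cos_sq t]

lemma rotM_mul_apply {k : ℕ} {p q : Fin k} (hpq : p ≠ q) (t : ℝ)
    (P : Matrix (Fin k) (Fin k) ℝ) (i j : Fin k) :
    (rotM p q t * P) i j =
      if i = p then Real.cos t * P p j - Real.sin t * P q j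
      else if i = q then Real.sin t * P p j + Real.cos t * P q j
      else P i j := by
  rw [Matrix.mul_apply, sum_split hpq]
  have hdiff : (∑ l ∈ Finset.univ \ {p, q}, rotM p q t i l * P l j)
      = if i = p ∨ i = q then 0 else P i j := by
    split_ifs with h
    · apply Finset.sum_eq_zero
      intro l hl
      have hl' := Finset.mem_sdiff.mp hl
      have hlp : l ≠ p := by simp at hl'; exact hl'.1
      have hlq : l ≠ q := by simp at hl'; exact hl'.2
      rcases h with h | h <;> simp [rotM, h, hlp, hlq, hpq.symm]
    · push_neg at h
      rw [Finset.sum_eq_single i]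
      · simp [rotM, h.1, h.2]
      · intro l hl hli
        simp [rotM, h.1, h.2, hli.symm]
      · intro hi
        exact absurd (Finset.mem_sdiff.mpr ⟨Finset.mem_univ _, by simp [h.1, h.2]⟩) hi
  rw [hdiff]
  by_cases hip : i = p <;> by_cases hiq : i = q <;>
    simp_all [rotM, hpq, hpq.symm] <;> ring

/-- Necessary condition for minimality (diagonality): if `P` is a signed permutation matrix
and `(P (I − ΛS⁻²)^{1/2} Uᵀ, U (I − ΛS⁻²)^{1/2} Pᵀ)` is a local minimum of `L`, then `P`
is diagonal. -/
theorem local_min_implies_diagonal (m k n : ℕ) (hk : 1 ≤ k) (hmk : k < m) (hn : 1 ≤ n)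
    (X : Matrix (Fin m) (Fin n) ℝ) (lam : Fin k → ℝ)
    (hlam_pos : ∀ i, 0 < lam i) (hlam_mono : StrictMono lam)
    (sig2 : Fin k → ℝ) (hs_anti : StrictAnti sig2) (hs_pos : ∀ i, 0 < sig2 i)
    (U : Matrix (Fin m) (Fin k) ℝ) (hUorth : Uᵀ * U = 1)
    (hUeig : ((1 / (n : ℝ)) • (X * Xᵀ)) * U = U * Matrix.diagonal sig2)
    (hrank : ((1 / (n : ℝ)) • (X * Xᵀ)).rank = k)
    (hlam_last : lam ⟨k - 1, by omega⟩ < sig2 ⟨k - 1, by omega⟩)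
    (P : Matrix (Fin k) (Fin k) ℝ)
    (hP01 : ∀ i j, P i j = 0 ∨ P i j = 1 ∨ P i j = -1)
    (hProw : ∀ i : Fin k, ∃! j : Fin k, P i j ≠ 0)
    (hPcol : ∀ j : Fin k, ∃! i : Fin k, P i j ≠ 0)
    (W1 : Matrix (Fin k) (Fin m) ℝ) (W2 : Matrix (Fin m) (Fin k) ℝ)
    (hW1 : W1 = P * Matrix.diagonal (fun i => Real.sqrt (1 - lam i / sig2 i)) * Uᵀ)
    (hW2 : W2 = U * Matrix.diagonal (fun i => Real.sqrt (1 - lam i / sig2 i)) * Pᵀ)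
    (hloc : IsLocalMin (LAEloss m k n X lam) (W1, W2)) :
    ∀ i j, i ≠ j → P i j = 0 := by
  intro a b hab
  by_contra hPab
  classical
  -- abbreviations
  set dd : Fin k → ℝ := fun i => 1 - lam i / sig2 i with hdd
  have hddpos : ∀ i, 0 < dd i := by
    intro i
    have hik : (i : ℕ) < k := i.isLt
    have h1 : lam i ≤ lam ⟨k - 1, by omega⟩ := hlam_mono.monotone (by
      simp only [Fin.le_def]; omega)
    have h2 : sig2 ⟨k - 1, by omega⟩ ≤ sig2 i := hs_anti.antitone (by
      simp only [Fin.le_def]; omega)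
    have h3 : lam i < sig2 i := lt_of_le_of_lt h1 (lt_of_lt_of_le hlam_last h2)
    have := hs_pos i
    simp only [hdd]
    rw [sub_pos, div_lt_one (hs_pos i)]
    exact h3
  have hddanti : StrictAnti dd := by
    intro x y hxy
    have h1 := hlam_mono hxy
    have h2 := hs_anti hxy
    have h3 := hs_pos x
    have h4 := hs_pos y
    have h5 := hlam_pos x
    simp only [hdd]
    have : lam x / sig2 x < lam y / sig2 y := by
      rw [div_lt_div_iff₀ h3 h4]
      nlinarith
    linarith
  -- the permutation
  set π : Fin k → Fin k := fun i => (hProw i).choose with hπdef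
  have hπne : ∀ i, P i (π i) ≠ 0 := fun i => (hProw i).choose_spec.1
  have hπuniq : ∀ i j, P i j ≠ 0 → j = π i := fun i j h => (hProw i).choose_spec.2 j h
  have hπinj : Function.Injective π := by
    intro x y hxy
    obtain ⟨i0, -, hu⟩ := hPcol (π x)
    have hx := hu x (hπne x)
    have hy := hu y (by rw [hxy]; exact hπne y)
    rw [hx, hy]
  have hπb : π a = b := (hπuniq a b hPab).symm
  -- find an inversion p < q with π q = p < π p
  set Sne : Finset (Fin k) := Finset.univ.filter (fun i => π i ≠ i) with hSne
  have hSnon : Sne.Nonempty := ⟨a, by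
    rw [hSne, Finset.mem_filter]
    exact ⟨Finset.mem_univ _, by rw [hπb]; exact Ne.symm hab⟩⟩
  set p := Sne.min' hSnon with hpdef
  have hpmem : p ∈ Sne := Sne.min'_mem hSnon
  have hpne : π p ≠ p := (Finset.mem_filter.mp hpmem).2
  have hmin : ∀ i, i < p → π i = i := by
    intro i hi
    by_contra h
    exact absurd (Sne.min'_le i (Finset.mem_filter.mpr ⟨Finset.mem_univ _, h⟩))
      (not_le.mpr hi)
  have hppi : p < π p := by
    rcases hpne.lt_or_gt with h | h
    · have h2 : π p = π (π p) := (hmin _ h).symm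
      exact absurd (hπinj h2).symm hpne
    · exact h
  obtain ⟨q, hq⟩ := Finite.injective_iff_surjective.mp hπinj p
  have hqnep : q ≠ p := by
    intro h
    rw [h] at hq
    exact hpne hq
  have hpq : p < q := by
    rcases hqnep.lt_or_gt with h | h
    · rw [hmin q h] at hq
      exact absurd hq hqnep
    · exact h
  have hpqne : p ≠ q := ne_of_lt hpq
  -- key quantities
  have hee_lt : dd (π p) < dd (π q) := hddanti (by rw [hq]; exact hppi)
  have hlam_lt : lam p < lam q := hlam_mono hpq
  have hc : (lam p - lam q) * (dd (π q) - dd (π p)) < 0 :=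
    mul_neg_of_neg_of_pos (by linarith) (by linarith)
  -- rewritten W1 W2
  have hW1' : W1 = P * Matrix.diagonal (fun i => Real.sqrt (dd i)) * Uᵀ := hW1
  have hW2' : W2 = U * Matrix.diagonal (fun i => Real.sqrt (dd i)) * Pᵀ := hW2
  set Lm : Matrix (Fin k) (Fin k) ℝ := Matrix.diagonal (fun i => Real.sqrt (lam i)) with hLm
  set Dm : Matrix (Fin k) (Fin k) ℝ := Matrix.diagonal (fun i => Real.sqrt (dd i)) with hDm
  -- the sum F
  set F : ℝ → ℝ := fun t => ∑ i, lam i * ∑ j, ((rotM p q t * P) i j) ^ 2 * dd j with hF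
  -- frobenius computation
  have hFrob : ∀ t, frobSq (Lm * (rotM p q t * P) * Dm) = F t := by
    intro t
    simp only [frobSq, hLm, hDm, Matrix.mul_diagonal, Matrix.diagonal_mul, hF]
    refine Finset.sum_congr rfl fun i _ => ?_
    rw [Finset.mul_sum]
    refine Finset.sum_congr rfl fun j _ => ?_
    rw [mul_pow, mul_pow, Real.sq_sqrt (le_of_lt (hlam_pos i)),
      Real.sq_sqrt (le_of_lt (hddpos j))]
    ring
  -- loss along the curve
  have hLoss : ∀ t, LAEloss m k n X lam (rotM p q t * W1, W2 * (rotM p q t)ᵀ)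
      = (1 / (n : ℝ)) * frobSq (X - W2 * W1 * X) + (F t + F t) := by
    intro t
    have hrec : W2 * (rotM p q t)ᵀ * (rotM p q t * W1) = W2 * W1 := by
      rw [Matrix.mul_assoc, ← Matrix.mul_assoc (rotM p q t)ᵀ (rotM p q t) W1,
        rotM_orth hpqne, Matrix.one_mul]
    have hterm2 : Lm * (rotM p q t * W1) = (Lm * (rotM p q t * P) * Dm) * Uᵀ := by
      rw [hW1']
      simp only [Matrix.mul_assoc, hDm]
    have hterm3 : (W2 * (rotM p q t)ᵀ) * Lm = U * (Lm * (rotM p q t * P) * Dm)ᵀ := by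
      rw [hW2']
      rw [Matrix.transpose_mul, Matrix.transpose_mul, Matrix.transpose_mul]
      rw [hLm, hDm]
      simp only [Matrix.diagonal_transpose, Matrix.mul_assoc]
    rw [LAEloss]
    simp only
    rw [hrec, ← hLm, hterm2, hterm3, frobSq_mul_orth_right _ _ hUorth,
      frobSq_orth_mul_left _ _ hUorth, frobSq_transpose, hFrob]
    ring
  -- cross terms vanish
  have hcross : ∀ j, P p j * P q j = 0 := by
    intro j
    by_contra h
    have h1 : P p j ≠ 0 := fun h0 => h (by rw [h0]; ring)
    have h2 : P q j ≠ 0 := fun h0 => h (by rw [h0]; ring)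
    obtain ⟨i0, -, hu⟩ := hPcol j
    exact hpqne ((hu p h1).trans (hu q h2).symm)
  -- row sums
  have hee : ∀ i, (∑ j, (P i j) ^ 2 * dd j) = dd (π i) := by
    intro i
    rw [Finset.sum_eq_single (π i)]
    · rcases hP01 i (π i) with h | h | h
      · exact absurd h (hπne i)
      · rw [h]; ring
      · rw [h]; ring
    · intro j _ hj
      have h0 : P i j = 0 := by
        by_contra h
        exact hj (hπuniq i j h)
      rw [h0]; ring
    · intro h
      exact absurd (Finset.mem_univ _) h
  have hgrow : ∀ t i, (∑ j, ((rotM p q t * P) i j) ^ 2 * dd j) =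
      if i = p then (Real.cos t) ^ 2 * dd (π p) + (Real.sin t) ^ 2 * dd (π q)
      else if i = q then (Real.sin t) ^ 2 * dd (π p) + (Real.cos t) ^ 2 * dd (π q)
      else dd (π i) := by
    intro t i
    by_cases hip : i = p
    · rw [if_pos hip, ← hee p, ← hee q, Finset.mul_sum, Finset.mul_sum,
        ← Finset.sum_add_distrib]
      refine Finset.sum_congr rfl fun j _ => ?_
      rw [rotM_mul_apply hpqne, if_pos hip]
      have h0 := hcross j
      linear_combination (-(2 * Real.cos t * Real.sin t * dd j)) * h0
    · rw [if_neg hip]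
      by_cases hiq : i = q
      · rw [if_pos hiq, ← hee p, ← hee q, Finset.mul_sum, Finset.mul_sum,
          ← Finset.sum_add_distrib]
        refine Finset.sum_congr rfl fun j _ => ?_
        rw [rotM_mul_apply hpqne, if_neg hip, if_pos hiq]
        have h0 := hcross j
        linear_combination (2 * Real.cos t * Real.sin t * dd j) * h0
      · rw [if_neg hiq, ← hee i]
        refine Finset.sum_congr rfl fun j _ => ?_
        rw [rotM_mul_apply hpqne, if_neg hip, if_neg hiq]
  -- F along the curve
  have hFsplit : ∀ t, F t = (∑ i ∈ Finset.univ \ {p, q}, lam i * dd (π i))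
      + (lam p * ((Real.cos t) ^ 2 * dd (π p) + (Real.sin t) ^ 2 * dd (π q))
        + lam q * ((Real.sin t) ^ 2 * dd (π p) + (Real.cos t) ^ 2 * dd (π q))) := by
    intro t
    rw [hF]
    simp only
    calc (∑ i, lam i * ∑ j, ((rotM p q t * P) i j) ^ 2 * dd j)
        = ∑ i, lam i * (if i = p then (Real.cos t) ^ 2 * dd (π p) + (Real.sin t) ^ 2 * dd (π q)
          else if i = q then (Real.sin t) ^ 2 * dd (π p) + (Real.cos t) ^ 2 * dd (π q)
          else dd (π i)) := Finset.sum_congr rfl fun i _ => by rw [hgrow t i]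
      _ = _ := by
          rw [sum_split hpqne]
          congr 1
          · refine Finset.sum_congr rfl fun i hi => ?_
            have hi' := Finset.mem_sdiff.mp hi
            have h1 : i ≠ p := by
              intro h; exact hi'.2 (by simp [h])
            have h2 : i ≠ q := by
              intro h; exact hi'.2 (by simp [h])
            rw [if_neg h1, if_neg h2]
          · rw [if_pos rfl, if_neg hpqne.symm, if_pos rfl]
  have hFt : ∀ t, F t = F 0 + (Real.sin t) ^ 2 *
      ((lam p - lam q) * (dd (π q) - dd (π p))) := by
    intro t
    rw [hFsplit t, hFsplit 0]
    simp only [Real.cos_zero, Real.sin_zero]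
    linear_combination (lam p * dd (π p) + lam q * dd (π q)) * (Real.sin_sq_add_cos_sq t)
  -- continuity of the curve
  have hRcont : Continuous (fun t : ℝ => rotM p q t) := by
    apply continuous_matrix
    intro i j
    simp only [rotM, Matrix.of_apply]
    split_ifs <;>
      first
        | exact Real.continuous_cos
        | exact Real.continuous_sin.neg
        | exact Real.continuous_sin
        | exact continuous_const
  have hγcont : ContinuousAt (fun t : ℝ => (rotM p q t * W1, W2 * (rotM p q t)ᵀ)) 0 := by
    apply Continuous.continuousAt
    exact (hRcont.matrix_mul continuous_const).prodMk
      (continuous_const.matrix_mul hRcont.matrix_transpose)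
  have hγ0 : (rotM p q 0 * W1, W2 * (rotM p q 0)ᵀ) = (W1, W2) := by
    simp [rotM_zero, Matrix.transpose_one, Matrix.one_mul, Matrix.mul_one]
  have hlm : IsLocalMin ((LAEloss m k n X lam) ∘
      (fun t : ℝ => (rotM p q t * W1, W2 * (rotM p q t)ᵀ))) 0 := by
    refine IsLocalMin.comp_continuous ?_ hγcont
    rw [hγ0]
    exact hloc
  obtain ⟨ε, hε, hball⟩ := Metric.eventually_nhds_iff.mp hlm
  set t0 : ℝ := min (ε / 2) 1 with ht0
  have ht0pos : 0 < t0 := lt_min (by linarith) one_pos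
  have ht0dist : dist t0 0 < ε := by
    rw [Real.dist_eq, sub_zero, abs_of_pos ht0pos]
    calc t0 ≤ ε / 2 := min_le_left _ _
      _ < ε := by linarith
  have hsin : 0 < Real.sin t0 := by
    apply Real.sin_pos_of_pos_of_lt_pi ht0pos
    calc t0 ≤ 1 := min_le_right _ _
      _ < Real.pi := by linarith [Real.pi_gt_three]
  have hineq := hball ht0dist
  simp only [Function.comp] at hineq
  rw [hLoss, hLoss, hFt t0] at hineq
  have hneg : (Real.sin t0) ^ 2 * ((lam p - lam q) * (dd (π q) - dd (π p))) < 0 :=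
    mul_neg_of_pos_of_neg (pow_pos hsin 2) hc
  have hle := le_of_add_le_add_left hineq
  linarith
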